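/- For every β ∈ (0,1/2] and ε ∈ (0,1) there exist K = K(ε) and d₀ = d₀(β,ε) such that for all integers d₁, d₂ ≥ d₀ that are multiples of K and satisfy 1 ≥ d₁/d₂ ≥ β/(1−β), there exist μ = μ(β,ε,d₁,d₂) > 0 such that for every N ∈ ℕ there is a finite (d₁,d₂)-biregular bipartite graph Z with |V(Z)| ≥ N in which every nonempty S ⊆ L(Z) with |S| ≤ μ|L(Z)| satisfies |N_Z(S)| ≥ (1−ε)·d₁·|S|. -/

import Mathlib

open scoped Classical

noncomputable section

namespace UNE

/-- The set of neighbors of a vertex set `S`. -/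
def nbrSet {V : Type*} (G : SimpleGraph V) (S : Set V) : Set V :=
  {v | ∃ u ∈ S, G.Adj v u}

/-- The set of unique-neighbors of `S`: vertices with exactly one neighbor in `S`. -/
def uniqueNbrs {V : Type*} (G : SimpleGraph V) (S : Set V) : Set V :=
  {v | ∃! u, u ∈ S ∧ G.Adj v u}

/-- Degree of a vertex. -/
def deg {V : Type*} (G : SimpleGraph V) (v : V) : ℕ :=
  {u | G.Adj v u}.ncard

/-- `L, R` is a bipartition of `G`. -/
structure IsBipartition {V : Type*} (G : SimpleGraph V) (L R : Set V) : Prop where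
  disj : Disjoint L R
  cover : L ∪ R = Set.univ
  cross : ∀ ⦃u v⦄, G.Adj u v → (u ∈ L ∧ v ∈ R) ∨ (u ∈ R ∧ v ∈ L)

/-- `G` is `(c,d)`-biregular with parts `L` and `R`. -/
structure IsBiregular {V : Type*} (G : SimpleGraph V) (L R : Set V) (c d : ℕ)
    extends IsBipartition G L R : Prop where
  degL : ∀ v ∈ L, deg G v = c
  degR : ∀ v ∈ R, deg G v = d

/-- Adjacency matrix over ℝ. -/
def adjMat {V : Type*} (G : SimpleGraph V) : Matrix V V ℝ :=
  Matrix.of fun u v => if G.Adj u v then (1 : ℝ) else 0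

/-- Diagonal degree matrix. -/
def degMat {V : Type*} (G : SimpleGraph V) : Matrix V V ℝ :=
  Matrix.diagonal fun v => (deg G v : ℝ)

/-- Bethe Hessian `H_G(t) = (D - I) t² - t A + I`. -/
def betheHessian {V : Type*} (G : SimpleGraph V) (t : ℝ) : Matrix V V ℝ :=
  t ^ 2 • (degMat G - 1) - t • adjMat G + 1

/-- The second largest eigenvalue (with multiplicity) of a square real matrix,
read off from the multiset of real roots of its characteristic polynomial. -/
def secondEig {V : Type*} [Fintype V] (A : Matrix V V ℝ) : ℝ :=
  (A.charpoly.roots.sort (· ≤ ·)).getD ((A.charpoly.roots.sort (· ≤ ·)).length - 2) 0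

/-- Orientations of edges of `G`. -/
def Orient {V : Type*} (G : SimpleGraph V) : Type _ := {p : V × V // G.Adj p.1 p.2}

/-- The non-backtracking matrix of `G`. -/
def nonBacktracking {V : Type*} (G : SimpleGraph V) : Matrix (Orient G) (Orient G) ℝ :=
  Matrix.of fun e f => if e.1.2 = f.1.1 ∧ e.1.1 ≠ f.1.2 then (1 : ℝ) else 0

/-- Spectral radius: largest absolute value of a complex eigenvalue. -/
def specRad {n : Type*} [Fintype n] (A : Matrix n n ℝ) : ℝ :=
  (((A.map fun x => (x : ℂ)).charpoly.roots.map fun z => ‖z‖).toList.foldr max 0)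

/-- `G` contains a bicycle (connected subgraph with one more edge than vertices)
on at most `ℓ` vertices. -/
def HasBicycle {V : Type*} (G : SimpleGraph V) (ℓ : ℝ) : Prop :=
  ∃ H : G.Subgraph, H.Connected ∧ H.edgeSet.ncard = H.verts.ncard + 1 ∧ (H.verts.ncard : ℝ) ≤ ℓ

/-- `G` contains a cycle of length at most `ℓ`. -/
def HasCycleLe {V : Type*} (G : SimpleGraph V) (ℓ : ℝ) : Prop :=
  ∃ (v : V) (w : G.Walk v v), w.IsCycle ∧ (w.length : ℝ) ≤ ℓ

/-- Number of edges of `G` with both endpoints in `S`. -/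
def eInside {V : Type*} (G : SimpleGraph V) (S : Set V) : ℕ :=
  {e ∈ G.edgeSet | ∀ v ∈ e, v ∈ S}.ncard

/-- Number of edges of `G` with one endpoint in `S` and the other in `T`. -/
def eBetween {V : Type*} (G : SimpleGraph V) (S T : Set V) : ℕ :=
  {e ∈ G.edgeSet | ∃ u ∈ S, ∃ v ∈ T, e = s(u, v)}.ncard

/-- Unique-neighbor expansion profile `P_H(t)`. -/
def profile {V : Type*} (H : SimpleGraph V) (t : ℝ) : ℝ :=
  sInf {r | ∃ S : Set V, S.Nonempty ∧ (S.ncard : ℝ) ≤ t ∧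
    r = ((uniqueNbrs H S).ncard : ℝ) / (S.ncard : ℝ)}


set_option maxHeartbeats 1600000


section Aux
open Finset Equiv

/-- Number of elements of a fintype satisfying a predicate (with a fixed
choice of decidability instance, to make statements robust). -/
def cnt {α : Type*} [Fintype α] (p : α → Prop) : ℕ :=
  (@Finset.filter α p (Classical.decPred p) Finset.univ).card

lemma cnt_eq {α : Type*} [Fintype α] (p : α → Prop) [DecidablePred p] :
    cnt p = (Finset.univ.filter p).card := by
  unfold cnt
  exact congrArg Finset.card (Finset.filter_congr_decidable _ _ _)

lemma cnt_congr {α : Type*} [Fintype α] (p q : α → Prop) (h : ∀ a, p a ↔ q a) :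
    cnt p = cnt q := by
  unfold cnt
  congr 1
  ext a
  simp only [Finset.mem_filter]
  exact and_congr_right fun _ => h a

lemma cnt_eq_card_of_all {α : Type*} [Fintype α] (p : α → Prop) (h : ∀ a, p a) :
    cnt p = Fintype.card α := by
  unfold cnt
  rw [Finset.filter_true_of_mem (fun a _ => h a)]
  exact Finset.card_univ

lemma cnt_exists_le {α β : Type*} [Fintype α] (I : Finset β) (Q : β → α → Prop) :
    cnt (fun a => ∃ x ∈ I, Q x a) ≤ ∑ x ∈ I, cnt (Q x) := by
  classical
  rw [cnt_eq]
  have hsub : (Finset.univ.filter fun a => ∃ x ∈ I, Q x a)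
      ⊆ I.biUnion (fun x => Finset.univ.filter (Q x)) := by
    intro a ha
    simp only [mem_filter, mem_univ, true_and] at ha
    obtain ⟨x, hx, hQ⟩ := ha
    exact Finset.mem_biUnion.2 ⟨x, hx, by simp [mem_filter, hQ]⟩
  refine le_trans (Finset.card_le_card hsub) (le_trans Finset.card_biUnion_le ?_)
  apply Finset.sum_le_sum
  intro x _
  rw [cnt_eq]

lemma cnt_pi {ι X : Type*} [Fintype ι] [DecidableEq ι] [Fintype X] [DecidableEq X]
    (Q : ι → X → Prop) :
    cnt (fun ω : ι → X => ∀ p, Q p (ω p)) = ∏ p, cnt (Q p) := by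
  classical
  rw [cnt_eq]
  have h : (Finset.univ.filter fun ω : ι → X => ∀ p, Q p (ω p))
      = Fintype.piFinset (fun p => Finset.univ.filter (Q p)) := by
    ext ω
    simp [Fintype.mem_piFinset]
  rw [h, Fintype.card_piFinset]
  apply Finset.prod_congr rfl
  intro p _
  rw [cnt_eq]

lemma perm_fix_card (A : Finset (Fin n)) :
    ((univ : Finset (Equiv.Perm (Fin n))).filter fun π => ∀ i ∈ A, π i = i).card
      ≤ (Nat.factorial (n - A.card)) := by
  classical
  have key : ∀ π ∈ (univ : Finset (Equiv.Perm (Fin n))).filter (fun π => ∀ i ∈ A, π i = i),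
      ∀ x : Fin n, x ∈ Aᶜ ↔ π x ∈ Aᶜ := by
    intro π hπ x
    simp only [mem_filter, mem_univ, true_and] at hπ
    simp only [Finset.mem_compl]
    constructor
    · intro hx hcon
      have h1 : π (π x) = π x := hπ _ hcon
      have h2 : π x = x := π.injective h1
      exact hx (h2 ▸ hcon)
    · intro hx hxA
      exact hx (by rwa [hπ x hxA])
  have hle := Finset.card_le_card_of_injOn
    (f := fun π : Equiv.Perm (Fin n) =>
      if h : ∀ x : Fin n, x ∈ Aᶜ ↔ π x ∈ Aᶜ then π.subtypePerm (fun x => (h x).symm) else 1)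
    (s := (univ : Finset (Equiv.Perm (Fin n))).filter (fun π => ∀ i ∈ A, π i = i))
    (t := (univ : Finset (Equiv.Perm {x : Fin n // x ∈ Aᶜ})))
    (fun a _ => mem_univ _) ?_
  · calc ((univ : Finset (Equiv.Perm (Fin n))).filter fun π => ∀ i ∈ A, π i = i).card
        ≤ (univ : Finset (Equiv.Perm {x : Fin n // x ∈ Aᶜ})).card := hle
      _ = (Nat.factorial (n - A.card)) := by
          rw [Finset.card_univ, Fintype.card_perm, Fintype.card_coe, Finset.card_compl,
            Fintype.card_fin]
  · intro a ha b hb hab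
    simp only [dif_pos (key a ha), dif_pos (key b hb)] at hab
    have haf : ∀ i ∈ A, a i = i := by simpa using (Finset.mem_filter.mp ha).2
    have hbf : ∀ i ∈ A, b i = i := by simpa using (Finset.mem_filter.mp hb).2
    ext x
    by_cases hx : x ∈ A
    · rw [haf x hx, hbf x hx]
    · have hx' : x ∈ Aᶜ := Finset.mem_compl.mpr hx
      have h3 : a.subtypePerm (fun x => (key a ha x).symm) ⟨x, hx'⟩ = b.subtypePerm (fun x => (key b hb x).symm) ⟨x, hx'⟩ := by
        rw [hab]
      have h4 := congrArg Subtype.val h3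
      simp only [Equiv.Perm.subtypePerm_apply] at h4
      exact congrArg Fin.val h4

def agreePred (A B : Finset (Fin n)) (f : A → B) (π : Equiv.Perm (Fin n)) : Prop :=
  ∀ i : A, π ↑i = ↑(f i)

lemma perm_mapsTo_card (A B : Finset (Fin n)) :
    ((univ : Finset (Equiv.Perm (Fin n))).filter fun π => ∀ i ∈ A, π i ∈ B).card
      ≤ B.card ^ A.card * (Nat.factorial (n - A.card)) := by
  classical
  have hsub : (univ : Finset (Equiv.Perm (Fin n))).filter (fun π => ∀ i ∈ A, π i ∈ B) ⊆
      (univ : Finset (A → B)).biUnion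
        (fun f => (univ : Finset (Equiv.Perm (Fin n))).filter (agreePred A B f)) := by
    intro π hπ
    simp only [mem_filter, mem_univ, true_and] at hπ
    refine Finset.mem_biUnion.2 ⟨fun i => ⟨π i, hπ i i.2⟩, mem_univ _, ?_⟩
    simp only [mem_filter, mem_univ, true_and]
    intro i
    rfl
  refine le_trans (Finset.card_le_card hsub) (le_trans Finset.card_biUnion_le ?_)
  have hfib : ∀ f : A → B,
      ((univ : Finset (Equiv.Perm (Fin n))).filter (agreePred A B f)).card
        ≤ (Nat.factorial (n - A.card)) := by
    intro f
    by_cases hne : ((univ : Finset (Equiv.Perm (Fin n))).filter (agreePred A B f)).Nonempty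
    · obtain ⟨π₀, hπ₀⟩ := hne
      simp only [mem_filter, mem_univ, true_and] at hπ₀
      refine le_trans (Finset.card_le_card_of_injOn (fun g => π₀⁻¹ * g) ?_ ?_) (perm_fix_card A)
      · intro g hg
        simp only [Finset.mem_coe, mem_filter, mem_univ, true_and] at hg ⊢
        intro i hi
        have h1 : g i = π₀ i := by rw [hg ⟨i, hi⟩, hπ₀ ⟨i, hi⟩]
        simp [Equiv.Perm.mul_apply, h1]
      · intro a _ b _ hab
        exact mul_left_cancel hab
    · simp [Finset.not_nonempty_iff_eq_empty.mp hne]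
  calc (∑ f : A → B, ((univ : Finset (Equiv.Perm (Fin n))).filter (agreePred A B f)).card)
      ≤ ∑ _f : A → B, (Nat.factorial (n - A.card)) := Finset.sum_le_sum (fun f _ => hfib f)
    _ = B.card ^ A.card * (Nat.factorial (n - A.card)) := by
        rw [Finset.sum_const, Finset.card_univ, Fintype.card_fun, Fintype.card_coe,
          Fintype.card_coe, smul_eq_mul]

lemma count_pi {ι X : Type*} [Fintype ι] [DecidableEq ι] [Fintype X] [DecidableEq X]
    (Q : ι → X → Prop) [∀ p x, Decidable (Q p x)] :
    ((univ : Finset (ι → X)).filter fun ω => ∀ p, Q p (ω p)).card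
      = ∏ p, ((univ : Finset X).filter (Q p)).card := by
  rw [← Fintype.card_piFinset]
  congr 1
  ext ω
  simp [Fintype.mem_piFinset]

lemma card_filter_exists_le {α β : Type*} [Fintype α] (I : Finset β) (Q : β → α → Prop)
    [DecidablePred fun a => ∃ x ∈ I, Q x a] [∀ x, DecidablePred (Q x)] :
    ((univ : Finset α).filter fun a => ∃ x ∈ I, Q x a).card
      ≤ ∑ x ∈ I, ((univ : Finset α).filter (Q x)).card := by
  classical
  refine le_trans (Finset.card_le_card ?_) Finset.card_biUnion_le
  intro a ha
  simp only [mem_filter, mem_univ, true_and] at ha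
  obtain ⟨x, hx, hQ⟩ := ha
  exact Finset.mem_biUnion.2 ⟨x, hx, by simp [mem_filter, hQ]⟩

lemma cnt_perm_mapsTo {n : ℕ} (A B : Finset (Fin n)) :
    cnt (fun π : Equiv.Perm (Fin n) => ∀ i ∈ A, π i ∈ B)
      ≤ B.card ^ A.card * (Nat.factorial (n - A.card)) := by
  classical
  rw [cnt_eq]
  exact perm_mapsTo_card A B

lemma pow_self_le_three_pow_mul_factorial (k : ℕ) :
    (k : ℝ) ^ k ≤ 3 ^ k * (Nat.factorial k) := by
  induction k with
  | zero => simp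
  | succ k ih =>
    have hstep : ((k + 1 : ℕ) : ℝ) ^ k ≤ 3 * (k : ℝ) ^ k := by
      rcases Nat.eq_zero_or_pos k with hk | hk
      · subst hk; norm_num
      · have hkpos : (0 : ℝ) < k := by exact_mod_cast hk
        have h1 : ((k + 1 : ℕ) : ℝ) = (k : ℝ) * (1 + 1 / k) := by
          rw [mul_add, mul_one, mul_one_div_cancel hkpos.ne', Nat.cast_succ]
        have h2 : (1 + 1 / (k : ℝ)) ^ k ≤ 3 := by
          have hle : (1 + 1 / (k : ℝ)) ≤ Real.exp (1 / k) :=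
            Real.add_one_le_exp (1 / (k : ℝ)) |>.trans_eq' (by ring_nf)
          have h3 : (1 + 1 / (k : ℝ)) ^ k ≤ (Real.exp (1 / k)) ^ k := by
            apply pow_le_pow_left₀ (by positivity) hle
          have h4 : (Real.exp (1 / (k : ℝ))) ^ k = Real.exp 1 := by
            rw [← Real.exp_nat_mul]
            congr 1
            field_simp
          rw [h4] at h3
          exact h3.trans (by
            have := Real.exp_one_lt_d9
            linarith)
        calc ((k + 1 : ℕ) : ℝ) ^ k = (k : ℝ) ^ k * (1 + 1 / k) ^ k := by
              rw [h1, mul_pow]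
          _ ≤ (k : ℝ) ^ k * 3 := by
              apply mul_le_mul_of_nonneg_left h2 (by positivity)
          _ = 3 * (k : ℝ) ^ k := by ring
    have hpos : (0 : ℝ) ≤ ((k + 1 : ℕ) : ℝ) := by positivity
    calc ((k + 1 : ℕ) : ℝ) ^ (k + 1) = ((k + 1 : ℕ) : ℝ) * ((k + 1 : ℕ) : ℝ) ^ k := by
          rw [pow_succ]; ring
      _ ≤ ((k + 1 : ℕ) : ℝ) * (3 * (k : ℝ) ^ k) := by
          apply mul_le_mul_of_nonneg_left hstep hpos
      _ ≤ ((k + 1 : ℕ) : ℝ) * (3 * (3 ^ k * (Nat.factorial k))) := by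
          apply mul_le_mul_of_nonneg_left (by linarith [ih]) hpos
      _ = 3 ^ (k + 1) * (((k + 1 : ℕ) : ℝ) * (Nat.factorial k)) := by ring
      _ = 3 ^ (k + 1) * (Nat.factorial (k + 1)) := by
          rw [Nat.factorial_succ]
          push_cast
          ring

lemma choose_le_real (m j : ℕ) (hj : 1 ≤ j) :
    ((m.choose j : ℕ) : ℝ) ≤ (3 * m / j) ^ j := by
  have hjR : (0 : ℝ) < j := by exact_mod_cast hj
  rw [div_pow, le_div_iff₀ (by positivity)]
  have h1 : (m.choose j : ℝ) * (Nat.factorial j) ≤ (m : ℝ) ^ j := by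
    have := Nat.descFactorial_le_pow m j
    rw [Nat.descFactorial_eq_factorial_mul_choose] at this
    exact_mod_cast by
      calc (m.choose j : ℕ) * (Nat.factorial j) = Nat.factorial j * m.choose j := by ring
        _ ≤ m ^ j := this
  calc (m.choose j : ℝ) * (j : ℝ) ^ j ≤ (m.choose j : ℝ) * (3 ^ j * (Nat.factorial j)) := by
        apply mul_le_mul_of_nonneg_left (pow_self_le_three_pow_mul_factorial j) (by positivity)
    _ = 3 ^ j * ((m.choose j : ℝ) * (Nat.factorial j)) := by ring
    _ ≤ 3 ^ j * (m : ℝ) ^ j := by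
        apply mul_le_mul_of_nonneg_left h1 (by positivity)
    _ = (3 * m : ℝ) ^ j := by rw [mul_pow]

lemma factorial_tail_le {n k : ℕ} (h : 2 * k ≤ n) :
    ((Nat.factorial (n - k) : ℕ) : ℝ) * ((n : ℝ) / 2) ^ k ≤ (Nat.factorial n : ℕ) := by
  induction k with
  | zero => simp
  | succ k ih =>
    have h2k : 2 * k ≤ n := by omega
    have hkn : k + 1 ≤ n := by omega
    have hsub : n - k = (n - (k + 1)) + 1 := by omega
    have hfac : (Nat.factorial (n - k) : ℝ) = (n - k : ℕ) * (Nat.factorial (n - (k + 1))) := by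
      rw [hsub, Nat.factorial_succ, ← hsub]
      have hc : ((n - k : ℕ) : ℝ) = ((n - (k+1) : ℕ) : ℝ) + 1 := by
        rw [hsub]; push_cast; ring
      push_cast
      rw [hc]
    have hhalf : (n : ℝ) / 2 ≤ ((n - k : ℕ) : ℝ) := by
      have : (k : ℝ) + (k : ℝ) + 2 ≤ n := by
        have : ((2 * (k + 1) : ℕ) : ℝ) ≤ n := by exact_mod_cast h
        push_cast at this
        linarith
      have hcast : ((n - k : ℕ) : ℝ) = (n : ℝ) - k := by
        have hkle : k ≤ n := by omega
        push_cast [Nat.cast_sub hkle]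
        ring
      rw [hcast]
      linarith
    calc (Nat.factorial (n - (k + 1)) : ℝ) * ((n : ℝ) / 2) ^ (k + 1)
        = ((Nat.factorial (n - (k + 1)) : ℝ) * ((n : ℝ) / 2)) * ((n : ℝ) / 2) ^ k := by
          rw [pow_succ]; ring
      _ ≤ ((Nat.factorial (n - (k + 1)) : ℝ) * ((n - k : ℕ) : ℝ)) * ((n : ℝ) / 2) ^ k := by
          apply mul_le_mul_of_nonneg_right
            (mul_le_mul_of_nonneg_left hhalf (by positivity)) (by positivity)
      _ = (Nat.factorial (n - k) : ℝ) * ((n : ℝ) / 2) ^ k := by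
          rw [hfac]; ring
      _ ≤ (Nat.factorial n : ℝ) := ih h2k

lemma geom_half_lt_one (M : ℕ) :
    ∑ s ∈ Finset.Icc 1 M, ((1 : ℝ) / 2) ^ s < 1 := by
  have key : ∀ M : ℕ, ∑ s ∈ Finset.Icc 1 M, ((1 : ℝ) / 2) ^ s ≤ 1 - (1 / 2) ^ M := by
    intro M
    induction M with
    | zero => simp
    | succ M ih =>
      rw [Finset.sum_Icc_succ_top (by omega)]
      have : ((1 : ℝ) / 2) ^ (M + 1) = (1 / 2) ^ M / 2 := by
        rw [pow_succ]; ring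
      rw [this]
      linarith
  have hpos : (0 : ℝ) < (1 / 2) ^ M := by positivity
  linarith [key M]

section Construction

variable (c d n : ℕ)

abbrev VV := (Fin d × Fin n) ⊕ (Fin c × Fin n)

def GG (ω : (Fin d × Fin c) → Equiv.Perm (Fin n)) : SimpleGraph (VV c d n) where
  Adj x y := ∃ u i v, (x = Sum.inl (u, i) ∧ y = Sum.inr (v, ω (u, v) i)) ∨
                      (y = Sum.inl (u, i) ∧ x = Sum.inr (v, ω (u, v) i))
  symm := by
    constructor
    rintro x y ⟨u, i, v, h⟩
    exact ⟨u, i, v, h.symm⟩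
  loopless := by
    constructor
    rintro x ⟨u, i, v, (⟨h1, h2⟩ | ⟨h1, h2⟩)⟩ <;> rw [h1] at h2 <;> simp at h2

def NBF (ω : (Fin d × Fin c) → Equiv.Perm (Fin n)) (𝒮 : Finset (Fin d × Fin n)) :
    Finset (Fin c × Fin n) :=
  (𝒮 ×ˢ (univ : Finset (Fin c))).image (fun qv => (qv.2, ω (qv.1.1, qv.2) qv.1.2))

variable {c d n}

lemma mem_NBF {ω : (Fin d × Fin c) → Equiv.Perm (Fin n)} {𝒮 : Finset (Fin d × Fin n)}
    {v : Fin c} {j : Fin n} :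
    (v, j) ∈ NBF c d n ω 𝒮 ↔ ∃ u i, (u, i) ∈ 𝒮 ∧ ω (u, v) i = j := by
  constructor
  · intro h
    obtain ⟨⟨⟨u, i⟩, v'⟩, hmem, heq⟩ := Finset.mem_image.mp h
    obtain ⟨h1, h2⟩ := Prod.mk.injEq .. ▸ heq
    · exact ⟨u, i, (Finset.mem_product.mp hmem).1, by simp_all⟩
  · rintro ⟨u, i, hui, hj⟩
    exact Finset.mem_image.mpr ⟨⟨(u, i), v⟩,
      Finset.mem_product.mpr ⟨hui, mem_univ _⟩, by simp [hj]⟩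

lemma GG_adj_inl {ω : (Fin d × Fin c) → Equiv.Perm (Fin n)} {u : Fin d} {i : Fin n}
    {y : VV c d n} :
    (GG c d n ω).Adj (Sum.inl (u, i)) y ↔ ∃ v, y = Sum.inr (v, ω (u, v) i) := by
  constructor
  · rintro ⟨u', i', v, (⟨h1, h2⟩ | ⟨h1, h2⟩)⟩
    · obtain ⟨rfl, rfl⟩ : u' = u ∧ i' = i := by
        have := Sum.inl.inj h1.symm; exact ⟨congrArg Prod.fst this, congrArg Prod.snd this⟩
      exact ⟨v, h2⟩
    · simp at h2
  · rintro ⟨v, rfl⟩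
    exact ⟨u, i, v, Or.inl ⟨rfl, rfl⟩⟩

lemma GG_adj_inr {ω : (Fin d × Fin c) → Equiv.Perm (Fin n)} {v : Fin c} {j : Fin n}
    {y : VV c d n} :
    (GG c d n ω).Adj (Sum.inr (v, j)) y ↔ ∃ u, y = Sum.inl (u, (ω (u, v)).symm j) := by
  constructor
  · rintro ⟨u', i', v', (⟨h1, h2⟩ | ⟨h1, h2⟩)⟩
    · simp at h1
    · obtain ⟨rfl, hj⟩ : v' = v ∧ ω (u', v') i' = j := by
        have h3 := Sum.inr.inj h2
        exact ⟨(congrArg Prod.fst h3).symm, (congrArg Prod.snd h3).symm⟩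
      refine ⟨u', ?_⟩
      rw [h1]
      congr
      exact ((Equiv.symm_apply_eq _).mpr hj.symm).symm
  · rintro ⟨u, rfl⟩
    exact ⟨u, (ω (u, v)).symm j, v, Or.inr ⟨rfl, by simp⟩⟩

lemma deg_GG_inl (ω : (Fin d × Fin c) → Equiv.Perm (Fin n)) (u : Fin d) (i : Fin n) :
    deg (GG c d n ω) (Sum.inl (u, i)) = c := by
  have hset : {y | (GG c d n ω).Adj (Sum.inl (u, i)) y}
      = (fun v : Fin c => (Sum.inr (v, ω (u, v) i) : VV c d n)) '' Set.univ := by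
    ext y
    simp only [Set.mem_setOf_eq, GG_adj_inl, Set.image_univ, Set.mem_range]
    exact ⟨fun ⟨v, h⟩ => ⟨v, h.symm⟩, fun ⟨v, h⟩ => ⟨v, h.symm⟩⟩
  have hinj : Function.Injective (fun v : Fin c => (Sum.inr (v, ω (u, v) i) : VV c d n)) := by
    intro a b hab
    simpa using congrArg Prod.fst (Sum.inr.inj hab)
  rw [deg, hset, Set.ncard_image_of_injective _ hinj, Set.ncard_univ]
  simp

lemma deg_GG_inr (ω : (Fin d × Fin c) → Equiv.Perm (Fin n)) (v : Fin c) (j : Fin n) :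
    deg (GG c d n ω) (Sum.inr (v, j)) = d := by
  have hset : {y | (GG c d n ω).Adj (Sum.inr (v, j)) y}
      = (fun u : Fin d => (Sum.inl (u, (ω (u, v)).symm j) : VV c d n)) '' Set.univ := by
    ext y
    simp only [Set.mem_setOf_eq, GG_adj_inr, Set.image_univ, Set.mem_range]
    exact ⟨fun ⟨u, h⟩ => ⟨u, h.symm⟩, fun ⟨u, h⟩ => ⟨u, h.symm⟩⟩
  have hinj : Function.Injective (fun u : Fin d => (Sum.inl (u, (ω (u, v)).symm j) : VV c d n)) := by
    intro a b hab
    simpa using congrArg Prod.fst (Sum.inl.inj hab)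
  rw [deg, hset, Set.ncard_image_of_injective _ hinj, Set.ncard_univ]
  simp

lemma nbrSet_GG (ω : (Fin d × Fin c) → Equiv.Perm (Fin n)) (𝒮 : Finset (Fin d × Fin n)) :
    nbrSet (GG c d n ω) (Sum.inl '' ↑𝒮) = Sum.inr '' ↑(NBF c d n ω 𝒮) := by
  ext y
  constructor
  · rintro ⟨x, ⟨q, hq, rfl⟩, hadj⟩
    have hadj' : (GG c d n ω).Adj (Sum.inl (q.1, q.2)) y := by
      simpa using ((GG c d n ω).adj_symm hadj)
    obtain ⟨v, rfl⟩ := GG_adj_inl.mp hadj'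
    exact ⟨(v, ω (q.1, v) q.2), mem_NBF.mpr ⟨q.1, q.2, by simpa using hq, rfl⟩, rfl⟩
  · rintro ⟨⟨v, j⟩, hp, rfl⟩
    obtain ⟨u, i, hui, hj⟩ := mem_NBF.mp hp
    refine ⟨Sum.inl (u, i), ⟨(u, i), by simpa using hui, rfl⟩, ?_⟩
    exact (GG c d n ω).adj_symm (GG_adj_inl.mpr ⟨v, by rw [hj]⟩)

lemma GG_cross {ω : (Fin d × Fin c) → Equiv.Perm (Fin n)} {x y : VV c d n}
    (h : (GG c d n ω).Adj x y) :
    (x ∈ Set.range (Sum.inl : (Fin d × Fin n) → VV c d n) ∧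
       y ∈ Set.range (Sum.inr : (Fin c × Fin n) → VV c d n)) ∨
    (x ∈ Set.range (Sum.inr : (Fin c × Fin n) → VV c d n) ∧
       y ∈ Set.range (Sum.inl : (Fin d × Fin n) → VV c d n)) := by
  obtain ⟨u, i, v, (⟨h1, h2⟩ | ⟨h1, h2⟩)⟩ := h
  · exact Or.inl ⟨⟨_, h1.symm⟩, ⟨_, h2.symm⟩⟩
  · exact Or.inr ⟨⟨_, h2.symm⟩, ⟨_, h1.symm⟩⟩

end Construction

section Transport

variable {α β : Type*} (e : α ≃ β) (G : SimpleGraph β)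

lemma comap_nbr_eq (a : α) :
    {b | (SimpleGraph.comap (⇑e) G).Adj a b} = ⇑e.symm '' {y | G.Adj (e a) y} := by
  ext b
  simp only [Set.mem_setOf_eq, SimpleGraph.comap_adj, Set.mem_image]
  constructor
  · intro h
    exact ⟨e b, h, by simp⟩
  · rintro ⟨y, hy, rfl⟩
    simpa using hy

lemma deg_comap (a : α) : deg (SimpleGraph.comap (⇑e) G) a = deg G (e a) := by
  rw [deg, comap_nbr_eq, Set.ncard_image_of_injective _ e.symm.injective, deg]

lemma nbrSet_comap (S : Set α) :
    nbrSet (SimpleGraph.comap (⇑e) G) S = ⇑e.symm '' nbrSet G (⇑e '' S) := by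
  ext b
  simp only [nbrSet, Set.mem_setOf_eq, SimpleGraph.comap_adj, Set.mem_image]
  constructor
  · rintro ⟨x, hx, hadj⟩
    exact ⟨e b, ⟨e x, ⟨x, hx, rfl⟩, hadj⟩, by simp⟩
  · rintro ⟨y, ⟨x', ⟨x, hx, rfl⟩, hadj⟩, rfl⟩
    exact ⟨x, hx, by simpa using hadj⟩

end Transport

def D0 (c d : ℕ) : ℝ := 3 * d * (12 * (c : ℝ) ^ 2) ^ c

lemma D0_nonneg (c d : ℕ) : 0 ≤ D0 c d := by
  unfold D0; positivity

lemma per_s_bound (c d n s : ℕ) (ε' μ : ℝ) (hε0 : 0 < ε') (hεh : ε' ≤ 1/2)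
    (hc8 : 8 ≤ ε' * c) (hμ0 : 0 ≤ μ) (hμd : μ * d ≤ 1 / (2 * (D0 c d + 1)))
    (hs1 : 1 ≤ s) (hsμ : (s : ℝ) ≤ μ * (d * n)) :
    (((d*n).choose s : ℕ) : ℝ) * (((c*n).choose (⌈(1-ε')*c*s⌉₊) : ℕ) : ℝ) *
      (((⌈(1-ε')*c*s⌉₊ : ℕ) : ℝ)^(c*s) * (2/(n:ℝ))^(c*s)) ≤ (1/2) ^ s := by
  have hD0 := D0_nonneg c d
  have hε1 : (0:ℝ) ≤ 1 - ε' := by linarith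
  have hcR : (16:ℝ) ≤ c := by nlinarith
  have hc1 : (1:ℕ) ≤ c := by
    have h : (1:ℝ) ≤ (c:ℝ) := le_trans (by norm_num) hcR
    exact_mod_cast h
  have hsR : (1:ℝ) ≤ s := by exact_mod_cast hs1
  have hμd0 : 0 ≤ μ * d := by positivity
  have hμd1 : μ * d ≤ 1 := by
    have h2 : (1:ℝ) / (2 * (D0 c d + 1)) ≤ 1 := by
      rw [div_le_one (by linarith)]
      linarith
    linarith
  have h2s : (2:ℝ) * s ≤ n := by
    have h1 : (2:ℝ) * s ≤ 2 * (μ * (d * n)) := by linarith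
    have h2 : (2:ℝ) * (μ * (d * n)) = (2 * (μ * d)) * n := by ring
    have h3 : (2:ℝ) * (μ * d) ≤ 1 := by
      have : (1:ℝ) / (2 * (D0 c d + 1)) ≤ 1/2 := by
        rw [div_le_div_iff₀ (by linarith) (by norm_num)]
        linarith
      linarith
    have h4 : ((2:ℝ) * (μ * d)) * n ≤ 1 * n := by
      apply mul_le_mul_of_nonneg_right h3 (by positivity)
    linarith
  have hn0 : (0:ℝ) < n := by linarith
  have hs0 : (0:ℝ) < s := by linarith
  set t0 : ℕ := ⌈(1-ε')*c*s⌉₊ with ht0def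
  have ht0l : (1-ε')*c*s ≤ (t0:ℝ) := Nat.le_ceil _
  have ht0u : (t0:ℝ) ≤ (1-ε')*c*s + 1 := by
    have := Nat.ceil_lt_add_one (by positivity : (0:ℝ) ≤ (1-ε')*c*s)
    exact this.le
  have ht0cs : t0 ≤ c * s := by
    rw [ht0def]
    apply Nat.ceil_le.mpr
    push_cast
    nlinarith
  have ht01 : 1 ≤ t0 := by
    have ha : (1/2:ℝ)*(c:ℝ) ≤ (1-ε')*c := by
      nlinarith [mul_nonneg (by linarith : (0:ℝ) ≤ 1-ε'-1/2) (by linarith : (0:ℝ) ≤ (c:ℝ))]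
    have hb : (8:ℝ) ≤ (1/2)*(c:ℝ) := by linarith
    have h2 : (8:ℝ)*1 ≤ ((1-ε')*(c:ℝ))*s := by
      apply mul_le_mul (by linarith) hsR (by norm_num) (by linarith)
    have h1 : (1:ℝ) ≤ (1-ε')*c*s := by linarith
    have : (1:ℝ) ≤ (t0:ℝ) := le_trans h1 ht0l
    exact_mod_cast this
  set k : ℕ := c * s - t0 with hkdef
  have hk : t0 + k = c * s := by omega
  have hkR : (k:ℝ) = (c:ℝ) * s - t0 := by
    rw [hkdef]
    push_cast [Nat.cast_sub ht0cs]
    ring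
  have hk4 : 4 * s + 3 ≤ k := by
    have h1 : ((4 * s + 3 : ℕ) : ℝ) ≤ (k:ℝ) := by
      rw [hkR]
      push_cast
      nlinarith
    exact_mod_cast h1
  have hks : s ≤ k := by omega
  have hkcs : k ≤ c * s := by omega
  -- choose bounds
  have hch1 : (((d*n).choose s : ℕ) : ℝ) ≤ (3 * ((d:ℝ)*n) / s) ^ s := by
    have h := choose_le_real (d*n) s hs1
    have hc' : ((d*n : ℕ):ℝ) = (d:ℝ)*n := by push_cast; ring
    rwa [hc'] at h
  have hch2 : (((c*n).choose t0 : ℕ) : ℝ) ≤ (3 * ((c:ℝ)*n) / t0) ^ t0 := by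
    have h := choose_le_real (c*n) t0 ht01
    have hc' : ((c*n : ℕ):ℝ) = (c:ℝ)*n := by push_cast; ring
    rwa [hc'] at h
  have ht0R0 : (0:ℝ) < t0 := by exact_mod_cast ht01
  -- main chain
  have key : (3 * ((d:ℝ)*n) / s) ^ s * (3 * ((c:ℝ)*n) / (t0:ℝ)) ^ t0 *
      (((t0:ℕ) : ℝ)^(t0 + k) * (2/(n:ℝ))^(t0 + k))
      = (3*(d:ℝ))^s * ((3*(c:ℝ))^t0 * 2^t0) * (2*(t0:ℝ)/n)^k * ((n:ℝ)/s)^s := by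
    have := hn0.ne'; have := hs0.ne'; have := ht0R0.ne'
    rw [div_pow, div_pow, div_pow, div_pow, div_pow, pow_add, pow_add, pow_add]
    field_simp
    ring
  have hsn1 : (s:ℝ)/n ≤ 1 := by rw [div_le_one hn0]; linarith
  have hsn0 : (0:ℝ) ≤ (s:ℝ)/n := by positivity
  have hsnμ : (s:ℝ)/n ≤ μ * d := by
    rw [div_le_iff₀ hn0]
    calc (s:ℝ) ≤ μ*(d*n) := hsμ
      _ = μ*d*n := by ring
  have hbase : D0 c d * ((s:ℝ)/n)^3 ≤ 1/2 := by
    have h1 : ((s:ℝ)/n)^3 ≤ μ * d := by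
      calc ((s:ℝ)/n)^3 ≤ (μ*d)^3 := pow_le_pow_left₀ hsn0 hsnμ 3
        _ = (μ*d)*(μ*d)^2 := by ring
        _ ≤ (μ*d)*1 := by
              apply mul_le_mul_of_nonneg_left _ hμd0
              calc (μ*d)^2 ≤ 1^2 := pow_le_pow_left₀ hμd0 hμd1 2
                _ = 1 := one_pow 2
        _ = μ*d := by ring
    calc D0 c d * ((s:ℝ)/n)^3 ≤ D0 c d * (μ*d) := mul_le_mul_of_nonneg_left h1 hD0
      _ ≤ D0 c d * (1/(2*(D0 c d+1))) := mul_le_mul_of_nonneg_left hμd hD0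
      _ ≤ 1/2 := by
          rw [mul_one_div, div_le_div_iff₀ (by linarith) (by norm_num)]
          linarith
  set j : ℕ := k - s with hjdef
  have hj : k = s + j := by omega
  have hj3 : 3*s + 3 ≤ j := by omega
  have hone : ((s:ℝ)/n) * ((n:ℝ)/s) = 1 := by field_simp
  have h3c : (1:ℝ) ≤ 3*c := by nlinarith
  have h2c : (1:ℝ) ≤ 2*c := by nlinarith
  have h2R : (1:ℝ) ≤ 2 := by norm_num
  rw [← hk]
  calc (((d*n).choose s : ℕ) : ℝ) * (((c*n).choose t0 : ℕ) : ℝ) *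
        (((t0:ℕ) : ℝ)^(t0+k) * (2/(n:ℝ))^(t0+k))
      ≤ (3 * ((d:ℝ)*n) / s) ^ s * (3 * ((c:ℝ)*n) / t0) ^ t0 *
        (((t0:ℕ) : ℝ)^(t0+k) * (2/(n:ℝ))^(t0+k)) := by
        apply mul_le_mul_of_nonneg_right _ (by positivity)
        apply mul_le_mul hch1 hch2 (by positivity) (by positivity)
    _ = (3*(d:ℝ))^s * ((3*(c:ℝ))^t0 * 2^t0) * (2*(t0:ℝ)/n)^k * ((n:ℝ)/s)^s := key
    _ ≤ (3*(d:ℝ))^s * ((3*(c:ℝ))^t0 * 2^t0) * ((2*(c:ℝ))^k * ((s:ℝ)/n)^k) * ((n:ℝ)/s)^s := by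
        apply mul_le_mul_of_nonneg_right _ (by positivity)
        apply mul_le_mul_of_nonneg_left _ (by positivity)
        have ht0cs' : (t0:ℝ) ≤ (c:ℝ)*s := by exact_mod_cast ht0cs
        calc (2*(t0:ℝ)/n)^k ≤ ((2*((c:ℝ)*s))/n)^k := by
              apply pow_le_pow_left₀ (by positivity)
              gcongr
          _ = (2*(c:ℝ))^k * ((s:ℝ)/n)^k := by
              rw [← mul_pow]; congr 1; ring
    _ = (3*(d:ℝ))^s * ((3*(c:ℝ))^t0 * 2^t0) * (2*(c:ℝ))^k * ((s:ℝ)/n)^j := by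
        have hsplit : ((s:ℝ)/n)^k = ((s:ℝ)/n)^s * ((s:ℝ)/n)^j := by rw [hj, pow_add]
        rw [hsplit]
        rw [show (3*(d:ℝ))^s * ((3*(c:ℝ))^t0 * 2^t0) *
            ((2*(c:ℝ))^k * (((s:ℝ)/n)^s * ((s:ℝ)/n)^j)) * ((n:ℝ)/s)^s
            = (3*(d:ℝ))^s * ((3*(c:ℝ))^t0 * 2^t0) * (2*(c:ℝ))^k * ((s:ℝ)/n)^j *
              (((s:ℝ)/n) * ((n:ℝ)/s))^s from by rw [mul_pow]; ring]
        rw [hone, one_pow, mul_one]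
    _ ≤ (3*(d:ℝ))^s * ((3*(c:ℝ))^t0 * 2^t0) * (2*(c:ℝ))^k * ((s:ℝ)/n)^(3*s+3) := by
        apply mul_le_mul_of_nonneg_left (pow_le_pow_of_le_one hsn0 hsn1 hj3) (by positivity)
    _ ≤ (3*(d:ℝ))^s * ((3*(c:ℝ))^(c*s) * 2^(c*s)) * (2*(c:ℝ))^(c*s) * ((s:ℝ)/n)^(3*s+3) := by
        apply mul_le_mul_of_nonneg_right _ (by positivity)
        apply mul_le_mul _ (pow_le_pow_right₀ h2c hkcs) (by positivity) (by positivity)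
        apply mul_le_mul_of_nonneg_left _ (by positivity)
        apply mul_le_mul (pow_le_pow_right₀ h3c ht0cs) (pow_le_pow_right₀ h2R ht0cs)
          (by positivity) (by positivity)
    _ = ((3*(d:ℝ)) * ((3*(c:ℝ))^c * 2^c) * (2*(c:ℝ))^c * ((s:ℝ)/n)^3)^s * ((s:ℝ)/n)^3 := by
        rw [pow_add, pow_mul, pow_mul, pow_mul, pow_mul]
        ring
    _ ≤ (1/2)^s * 1 := by
        apply mul_le_mul _ (pow_le_one₀ hsn0 hsn1) (by positivity) (by positivity)
        apply pow_le_pow_left₀ (by positivity)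
        calc (3*(d:ℝ)) * ((3*(c:ℝ))^c * 2^c) * (2*(c:ℝ))^c * ((s:ℝ)/n)^3
            = D0 c d * ((s:ℝ)/n)^3 := by
              have h12 : ((3*(c:ℝ))^c * 2^c) * (2*(c:ℝ))^c = (12*(c:ℝ)^2)^c := by
                rw [← mul_pow, ← mul_pow]; congr 1; ring
              unfold D0
              rw [← h12]
              ring
          _ ≤ 1/2 := hbase
    _ = (1/2)^s := mul_one _

lemma sum_su {d n : ℕ} (𝒮 : Finset (Fin d × Fin n)) :
    ∑ u : Fin d, ((𝒮.filter fun q => q.1 = u).image Prod.snd).card = 𝒮.card := by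
  have h : ∀ u : Fin d, ((𝒮.filter fun q => q.1 = u).image Prod.snd).card
      = (𝒮.filter fun q => q.1 = u).card := by
    intro u
    apply Finset.card_image_of_injOn
    intro a ha b hb hab
    simp only [Finset.coe_filter, Set.mem_setOf_eq] at ha hb
    exact Prod.ext (ha.2.trans hb.2.symm) hab
  simp_rw [h]
  exact (Finset.card_eq_sum_card_fiberwise (fun x _ => Finset.mem_univ x.1)).symm

lemma su_le {d n : ℕ} (𝒮 : Finset (Fin d × Fin n)) (u : Fin d) :
    ((𝒮.filter fun q => q.1 = u).image Prod.snd).card ≤ 𝒮.card :=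
  le_trans (Finset.card_image_le) (Finset.card_filter_le _ _)

lemma exists_good (c d n : ℕ) (ε' μ : ℝ) (hε0 : 0 < ε') (hεh : ε' ≤ 1/2)
    (hc8 : 8 ≤ ε' * c) (hμ0 : 0 ≤ μ) (hμd : μ * d ≤ 1 / (2 * (D0 c d + 1))) :
    ∃ ω : (Fin d × Fin c) → Equiv.Perm (Fin n), ∀ 𝒮 : Finset (Fin d × Fin n),
      𝒮.Nonempty → (𝒮.card : ℝ) ≤ μ * ((d:ℝ) * n) →
      (1 - ε') * c * 𝒮.card ≤ ((NBF c d n ω 𝒮).card : ℝ) := by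
  classical
  by_contra hcon
  push_neg at hcon
  set M := ⌊μ * ((d:ℝ) * n)⌋₊ with hM
  have hD0 : 0 ≤ D0 c d := by unfold D0; positivity
  have hfacts : ∀ s : ℕ, 1 ≤ s → (s:ℝ) ≤ μ * ((d:ℝ)*n) →
      2*s ≤ n ∧ ⌈(1-ε')*c*s⌉₊ ≤ c*s := by
    intro s hs1 hsμ
    constructor
    · have h3 : (2:ℝ) * (μ * d) ≤ 1 := by
        have h4 : (1:ℝ) / (2 * (D0 c d + 1)) ≤ 1/2 := by
          rw [div_le_div_iff₀ (by linarith) (by norm_num)]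
          linarith
        linarith
      have h5 : ((2*s : ℕ):ℝ) ≤ (n:ℝ) := by
        push_cast
        calc (2:ℝ)*s ≤ 2*(μ*((d:ℝ)*n)) := by linarith
          _ = (2*(μ*d))*n := by ring
          _ ≤ 1*n := mul_le_mul_of_nonneg_right h3 (by positivity)
          _ = n := one_mul _
      exact_mod_cast h5
    · apply Nat.ceil_le.mpr
      push_cast
      nlinarith [Nat.cast_nonneg (α := ℝ) c, Nat.cast_nonneg (α := ℝ) s]
  -- every ω is bad
  have hall : ∀ ω : (Fin d × Fin c) → Equiv.Perm (Fin n),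
      ∃ s ∈ Finset.Icc 1 M,
      ∃ 𝒮 ∈ Finset.powersetCard s (univ : Finset (Fin d × Fin n)),
      ∃ 𝒯 ∈ Finset.powersetCard (⌈(1-ε')*c*s⌉₊) (univ : Finset (Fin c × Fin n)),
        ∀ q ∈ 𝒮, ∀ v : Fin c, (v, ω (q.1, v) q.2) ∈ 𝒯 := by
    intro ω
    obtain ⟨𝒮, hne, hsize, hbad⟩ := hcon ω
    have hs1 : 1 ≤ 𝒮.card := hne.card_pos
    have hsM : 𝒮.card ≤ M := Nat.le_floor hsize
    obtain ⟨h2s, ht0cs⟩ := hfacts 𝒮.card hs1 hsize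
    have hNle : (NBF c d n ω 𝒮).card ≤ ⌈(1-ε')*c*𝒮.card⌉₊ := by
      have h1 : ((NBF c d n ω 𝒮).card : ℝ) < ((⌈(1-ε')*c*𝒮.card⌉₊ : ℕ) : ℝ) :=
        lt_of_lt_of_le hbad (Nat.le_ceil _)
      exact_mod_cast h1.le
    have hcn : ⌈(1-ε')*c*𝒮.card⌉₊ ≤ Fintype.card (Fin c × Fin n) := by
      simp only [Fintype.card_prod, Fintype.card_fin]
      calc ⌈(1-ε')*c*𝒮.card⌉₊ ≤ c * 𝒮.card := ht0cs
        _ ≤ c * n := Nat.mul_le_mul_left c (by omega)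
    obtain ⟨𝒯, h𝒯sub, h𝒯card⟩ := Finset.exists_superset_card_eq hNle hcn
    refine ⟨𝒮.card, Finset.mem_Icc.mpr ⟨hs1, hsM⟩, 𝒮,
      Finset.mem_powersetCard_univ.mpr rfl, 𝒯,
      Finset.mem_powersetCard_univ.mpr h𝒯card, ?_⟩
    intro q hq v
    apply h𝒯sub
    exact Finset.mem_image.mpr ⟨(q, v), Finset.mem_product.mpr ⟨hq, Finset.mem_univ _⟩, rfl⟩
  -- innermost count bound
  have hinner : ∀ s ∈ Finset.Icc 1 M,
      ∀ 𝒮 ∈ Finset.powersetCard s (univ : Finset (Fin d × Fin n)),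
      ∀ 𝒯 ∈ Finset.powersetCard (⌈(1-ε')*c*s⌉₊) (univ : Finset (Fin c × Fin n)),
      ((cnt (fun ω : (Fin d × Fin c) → Equiv.Perm (Fin n) =>
          ∀ q ∈ 𝒮, ∀ v : Fin c, (v, ω (q.1, v) q.2) ∈ 𝒯) : ℕ) : ℝ)
        ≤ ((⌈(1-ε')*c*s⌉₊ : ℕ) : ℝ)^(c*s) * ((2/(n:ℝ))^(c*s) *
            ((Nat.factorial n : ℕ) : ℝ)^(c*d)) := by
    intro s hsIcc 𝒮 h𝒮 𝒯 h𝒯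
    obtain ⟨hs1, hsM⟩ := Finset.mem_Icc.mp hsIcc
    have hS : 𝒮.card = s := Finset.mem_powersetCard_univ.mp h𝒮
    have hT : 𝒯.card = ⌈(1-ε')*c*s⌉₊ := Finset.mem_powersetCard_univ.mp h𝒯
    have hsμ : (s:ℝ) ≤ μ * ((d:ℝ)*n) :=
      le_trans (Nat.cast_le.mpr hsM) (Nat.floor_le (by positivity))
    obtain ⟨h2s, ht0cs⟩ := hfacts s hs1 hsμ
    have hn0 : (0:ℝ) < n := by
      have h2 : 2 ≤ n := by omega
      exact_mod_cast by omega
    set Su : Fin d → Finset (Fin n) := fun u => (𝒮.filter fun q => q.1 = u).image Prod.snd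
      with hSu
    set Tv : Fin c → Finset (Fin n) := fun v => (𝒯.filter fun q => q.1 = v).image Prod.snd
      with hTv
    have hmemSu : ∀ (u : Fin d) (i : Fin n), i ∈ Su u ↔ (u, i) ∈ 𝒮 := by
      intro u i
      simp only [hSu, Finset.mem_image, Finset.mem_filter]
      constructor
      · rintro ⟨⟨u', i'⟩, ⟨hq, rfl⟩, rfl⟩
        exact hq
      · intro h
        exact ⟨(u, i), ⟨h, rfl⟩, rfl⟩
    have hmemTv : ∀ (v : Fin c) (j : Fin n), j ∈ Tv v ↔ (v, j) ∈ 𝒯 := by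
      intro v j
      simp only [hTv, Finset.mem_image, Finset.mem_filter]
      constructor
      · rintro ⟨⟨v', j'⟩, ⟨hq, rfl⟩, rfl⟩
        exact hq
      · intro h
        exact ⟨(v, j), ⟨h, rfl⟩, rfl⟩
    have hiff : ∀ ω : (Fin d × Fin c) → Equiv.Perm (Fin n),
        (∀ q ∈ 𝒮, ∀ v : Fin c, (v, ω (q.1, v) q.2) ∈ 𝒯)
          ↔ ∀ p : Fin d × Fin c, ∀ i ∈ Su p.1, ω p i ∈ Tv p.2 := by
      intro ω
      constructor
      · intro h p i hi
        rw [hmemTv]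
        have := h (p.1, i) ((hmemSu p.1 i).mp hi) p.2
        simpa using this
      · intro h q hq v
        rw [← hmemTv]
        have := h (q.1, v) q.2 ((hmemSu q.1 q.2).mpr (by simpa using hq))
        simpa using this
    rw [cnt_congr _ _ hiff, cnt_pi (fun (p : Fin d × Fin c) (π : Equiv.Perm (Fin n)) =>
      ∀ i ∈ Su p.1, π i ∈ Tv p.2)]
    push_cast [Nat.cast_prod]
    calc (∏ p : Fin d × Fin c, ((cnt (fun π : Equiv.Perm (Fin n) =>
            ∀ i ∈ Su p.1, π i ∈ Tv p.2) : ℕ) : ℝ))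
        ≤ ∏ p : Fin d × Fin c, (((⌈(1-ε')*c*s⌉₊ : ℕ) : ℝ)^(Su p.1).card *
            ((2/(n:ℝ))^(Su p.1).card * ((Nat.factorial n : ℕ) : ℝ))) := by
          apply Finset.prod_le_prod
          · intro p _
            positivity
          · intro p _
            calc ((cnt (fun π : Equiv.Perm (Fin n) =>
                  ∀ i ∈ Su p.1, π i ∈ Tv p.2) : ℕ) : ℝ)
                ≤ ((Tv p.2).card : ℝ)^(Su p.1).card *
                    ((Nat.factorial (n - (Su p.1).card) : ℕ) : ℝ) := by
                  exact_mod_cast cnt_perm_mapsTo (Su p.1) (Tv p.2)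
              _ ≤ ((⌈(1-ε')*c*s⌉₊ : ℕ) : ℝ)^(Su p.1).card *
                    ((2/(n:ℝ))^(Su p.1).card * ((Nat.factorial n : ℕ) : ℝ)) := by
                  apply mul_le_mul
                  · apply pow_le_pow_left₀ (by positivity)
                    have hTvle : (Tv p.2).card ≤ ⌈(1-ε')*c*s⌉₊ := by
                      rw [← hT]
                      exact le_trans Finset.card_image_le (Finset.card_filter_le _ _)
                    exact_mod_cast hTvle
                  · have hsuS : (Su p.1).card ≤ s := by
                      rw [← hS]; exact su_le 𝒮 p.1
                    have h2su : 2 * (Su p.1).card ≤ n := by omega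
                    have hinv : ((n:ℝ)/2)^(Su p.1).card * ((2:ℝ)/n)^(Su p.1).card = 1 := by
                      rw [← mul_pow, show ((n:ℝ)/2)*((2:ℝ)/n) = 1 from by field_simp, one_pow]
                    calc ((Nat.factorial (n - (Su p.1).card) : ℕ) : ℝ)
                        = (((Nat.factorial (n - (Su p.1).card) : ℕ) : ℝ) *
                            ((n:ℝ)/2)^(Su p.1).card) * ((2:ℝ)/n)^(Su p.1).card := by
                          rw [mul_assoc, hinv, mul_one]
                      _ ≤ ((Nat.factorial n : ℕ) : ℝ) * ((2:ℝ)/n)^(Su p.1).card :=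
                          mul_le_mul_of_nonneg_right (factorial_tail_le h2su) (by positivity)
                      _ = ((2:ℝ)/n)^(Su p.1).card * ((Nat.factorial n : ℕ) : ℝ) := mul_comm _ _
                  · positivity
                  · positivity
      _ = ((⌈(1-ε')*c*s⌉₊ : ℕ) : ℝ)^(c*s) * ((2/(n:ℝ))^(c*s) *
            ((Nat.factorial n : ℕ) : ℝ)^(c*d)) := by
          rw [Fintype.prod_prod_type]
          simp only [Finset.prod_const, Finset.card_univ, Fintype.card_fin]
          have hsum : ∑ u : Fin d, (Su u).card = s := by
            simpa [hSu] using (sum_su 𝒮).trans hS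
          calc ∏ u : Fin d, ((((⌈(1-ε')*c*s⌉₊ : ℕ) : ℝ)^(Su u).card *
                ((2/(n:ℝ))^(Su u).card * ((Nat.factorial n : ℕ) : ℝ))))^c
              = (∏ u : Fin d, (((⌈(1-ε')*c*s⌉₊ : ℕ) : ℝ)^(Su u).card *
                ((2/(n:ℝ))^(Su u).card * ((Nat.factorial n : ℕ) : ℝ))))^c := by
                rw [← Finset.prod_pow]
            _ = ((((⌈(1-ε')*c*s⌉₊ : ℕ) : ℝ)^s) * (((2/(n:ℝ))^s) *
                ((Nat.factorial n : ℕ) : ℝ)^d))^c := by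
                rw [Finset.prod_mul_distrib, Finset.prod_mul_distrib,
                  Finset.prod_pow_eq_pow_sum, Finset.prod_pow_eq_pow_sum, hsum,
                  Finset.prod_const, Finset.card_univ, Fintype.card_fin]
            _ = ((⌈(1-ε')*c*s⌉₊ : ℕ) : ℝ)^(c*s) * ((2/(n:ℝ))^(c*s) *
                ((Nat.factorial n : ℕ) : ℝ)^(c*d)) := by
                rw [mul_pow, mul_pow, ← pow_mul, ← pow_mul, ← pow_mul,
                  Nat.mul_comm s c, Nat.mul_comm d c]
  -- final assembly
  have hgeom := geom_half_lt_one M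
  have hF0 : (0:ℝ) < ((Nat.factorial n : ℕ) : ℝ)^(c*d) := by positivity
  have hcardΩ : ((Fintype.card ((Fin d × Fin c) → Equiv.Perm (Fin n)) : ℕ) : ℝ)
      = ((Nat.factorial n : ℕ) : ℝ)^(c*d) := by
    rw [Fintype.card_fun, Fintype.card_perm, Fintype.card_fin, Fintype.card_prod,
      Fintype.card_fin, Fintype.card_fin]
    push_cast
    rw [Nat.mul_comm d c]
  have hQs : ∀ s ∈ Finset.Icc 1 M,
      ((cnt (fun ω : (Fin d × Fin c) → Equiv.Perm (Fin n) =>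
        ∃ 𝒮 ∈ Finset.powersetCard s (univ : Finset (Fin d × Fin n)),
          ∃ 𝒯 ∈ Finset.powersetCard (⌈(1-ε')*c*s⌉₊) (univ : Finset (Fin c × Fin n)),
            ∀ q ∈ 𝒮, ∀ v : Fin c, (v, ω (q.1, v) q.2) ∈ 𝒯) : ℕ) : ℝ)
      ≤ (1/2)^s * ((Nat.factorial n : ℕ) : ℝ)^(c*d) := by
    intro s hs
    obtain ⟨hs1, hsM⟩ := Finset.mem_Icc.mp hs
    have hsμ : (s:ℝ) ≤ μ * ((d:ℝ)*n) :=
      le_trans (Nat.cast_le.mpr hsM) (Nat.floor_le (by positivity))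
    have h1 := cnt_exists_le (Finset.powersetCard s (univ : Finset (Fin d × Fin n)))
      (fun 𝒮 (ω : (Fin d × Fin c) → Equiv.Perm (Fin n)) =>
        ∃ 𝒯 ∈ Finset.powersetCard (⌈(1-ε')*c*s⌉₊) (univ : Finset (Fin c × Fin n)),
          ∀ q ∈ 𝒮, ∀ v : Fin c, (v, ω (q.1, v) q.2) ∈ 𝒯)
    have h2 : ∀ 𝒮 : Finset (Fin d × Fin n), cnt (fun ω : (Fin d × Fin c) → Equiv.Perm (Fin n) =>
        ∃ 𝒯 ∈ Finset.powersetCard (⌈(1-ε')*c*s⌉₊) (univ : Finset (Fin c × Fin n)),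
          ∀ q ∈ 𝒮, ∀ v : Fin c, (v, ω (q.1, v) q.2) ∈ 𝒯)
        ≤ ∑ 𝒯 ∈ Finset.powersetCard (⌈(1-ε')*c*s⌉₊) (univ : Finset (Fin c × Fin n)),
            cnt (fun ω : (Fin d × Fin c) → Equiv.Perm (Fin n) =>
              ∀ q ∈ 𝒮, ∀ v : Fin c, (v, ω (q.1, v) q.2) ∈ 𝒯) := by
      intro 𝒮
      exact cnt_exists_le _ _
    calc ((cnt (fun ω : (Fin d × Fin c) → Equiv.Perm (Fin n) =>
        ∃ 𝒮 ∈ Finset.powersetCard s (univ : Finset (Fin d × Fin n)),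
          ∃ 𝒯 ∈ Finset.powersetCard (⌈(1-ε')*c*s⌉₊) (univ : Finset (Fin c × Fin n)),
            ∀ q ∈ 𝒮, ∀ v : Fin c, (v, ω (q.1, v) q.2) ∈ 𝒯) : ℕ) : ℝ)
        ≤ ∑ 𝒮 ∈ Finset.powersetCard s (univ : Finset (Fin d × Fin n)),
            ∑ 𝒯 ∈ Finset.powersetCard (⌈(1-ε')*c*s⌉₊) (univ : Finset (Fin c × Fin n)),
              ((cnt (fun ω : (Fin d × Fin c) → Equiv.Perm (Fin n) =>
                ∀ q ∈ 𝒮, ∀ v : Fin c, (v, ω (q.1, v) q.2) ∈ 𝒯) : ℕ) : ℝ) := by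
          calc ((cnt (fun ω : (Fin d × Fin c) → Equiv.Perm (Fin n) =>
              ∃ 𝒮 ∈ Finset.powersetCard s (univ : Finset (Fin d × Fin n)),
                ∃ 𝒯 ∈ Finset.powersetCard (⌈(1-ε')*c*s⌉₊) (univ : Finset (Fin c × Fin n)),
                  ∀ q ∈ 𝒮, ∀ v : Fin c, (v, ω (q.1, v) q.2) ∈ 𝒯) : ℕ) : ℝ)
              ≤ ∑ 𝒮 ∈ Finset.powersetCard s (univ : Finset (Fin d × Fin n)),
                  ((cnt (fun ω : (Fin d × Fin c) → Equiv.Perm (Fin n) =>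
                    ∃ 𝒯 ∈ Finset.powersetCard (⌈(1-ε')*c*s⌉₊)
                        (univ : Finset (Fin c × Fin n)),
                      ∀ q ∈ 𝒮, ∀ v : Fin c, (v, ω (q.1, v) q.2) ∈ 𝒯) : ℕ) : ℝ) := by
                exact_mod_cast h1
            _ ≤ _ := by
                apply Finset.sum_le_sum
                intro 𝒮 h𝒮
                exact_mod_cast h2 𝒮
      _ ≤ ∑ 𝒮 ∈ Finset.powersetCard s (univ : Finset (Fin d × Fin n)),
            ∑ 𝒯 ∈ Finset.powersetCard (⌈(1-ε')*c*s⌉₊) (univ : Finset (Fin c × Fin n)),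
              (((⌈(1-ε')*c*s⌉₊ : ℕ) : ℝ)^(c*s) * ((2/(n:ℝ))^(c*s) *
                ((Nat.factorial n : ℕ) : ℝ)^(c*d))) := by
          apply Finset.sum_le_sum
          intro 𝒮 h𝒮
          apply Finset.sum_le_sum
          intro 𝒯 h𝒯
          exact hinner s hs 𝒮 h𝒮 𝒯 h𝒯
      _ = (((d*n).choose s : ℕ):ℝ) * ((((c*n).choose (⌈(1-ε')*c*s⌉₊) : ℕ)):ℝ) *
            (((⌈(1-ε')*c*s⌉₊ : ℕ) : ℝ)^(c*s) * ((2/(n:ℝ))^(c*s) *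
              ((Nat.factorial n : ℕ) : ℝ)^(c*d))) := by
          rw [Finset.sum_const, Finset.sum_const, Finset.card_powersetCard,
            Finset.card_powersetCard, Finset.card_univ, Finset.card_univ]
          simp only [Fintype.card_prod, Fintype.card_fin, nsmul_eq_mul]
          push_cast
          ring
      _ ≤ (1/2)^s * ((Nat.factorial n : ℕ) : ℝ)^(c*d) := by
          have hper := per_s_bound c d n s ε' μ hε0 hεh hc8 hμ0 hμd hs1
            (by push_cast; push_cast at hsμ; linarith)
          calc (((d*n).choose s : ℕ):ℝ) * ((((c*n).choose (⌈(1-ε')*c*s⌉₊) : ℕ)):ℝ) *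
                (((⌈(1-ε')*c*s⌉₊ : ℕ) : ℝ)^(c*s) * ((2/(n:ℝ))^(c*s) *
                  ((Nat.factorial n : ℕ) : ℝ)^(c*d)))
              = ((((d*n).choose s : ℕ):ℝ) * ((((c*n).choose (⌈(1-ε')*c*s⌉₊) : ℕ)):ℝ) *
                (((⌈(1-ε')*c*s⌉₊ : ℕ) : ℝ)^(c*s) * (2/(n:ℝ))^(c*s))) *
                  ((Nat.factorial n : ℕ) : ℝ)^(c*d) := by ring
            _ ≤ (1/2)^s * ((Nat.factorial n : ℕ) : ℝ)^(c*d) :=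
                mul_le_mul_of_nonneg_right hper (by positivity)
  have hbig : ((Fintype.card ((Fin d × Fin c) → Equiv.Perm (Fin n)) : ℕ) : ℝ)
      < ((Nat.factorial n : ℕ) : ℝ)^(c*d) := by
    have h0 : Fintype.card ((Fin d × Fin c) → Equiv.Perm (Fin n))
        = cnt (fun ω : (Fin d × Fin c) → Equiv.Perm (Fin n) =>
            ∃ s ∈ Finset.Icc 1 M,
            ∃ 𝒮 ∈ Finset.powersetCard s (univ : Finset (Fin d × Fin n)),
            ∃ 𝒯 ∈ Finset.powersetCard (⌈(1-ε')*c*s⌉₊) (univ : Finset (Fin c × Fin n)),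
              ∀ q ∈ 𝒮, ∀ v : Fin c, (v, ω (q.1, v) q.2) ∈ 𝒯) :=
      (cnt_eq_card_of_all _ hall).symm
    have h1 := cnt_exists_le (Finset.Icc 1 M)
      (fun s (ω : (Fin d × Fin c) → Equiv.Perm (Fin n)) =>
        ∃ 𝒮 ∈ Finset.powersetCard s (univ : Finset (Fin d × Fin n)),
          ∃ 𝒯 ∈ Finset.powersetCard (⌈(1-ε')*c*s⌉₊) (univ : Finset (Fin c × Fin n)),
            ∀ q ∈ 𝒮, ∀ v : Fin c, (v, ω (q.1, v) q.2) ∈ 𝒯)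
    calc ((Fintype.card ((Fin d × Fin c) → Equiv.Perm (Fin n)) : ℕ) : ℝ)
        ≤ ∑ s ∈ Finset.Icc 1 M,
            ((cnt (fun ω : (Fin d × Fin c) → Equiv.Perm (Fin n) =>
              ∃ 𝒮 ∈ Finset.powersetCard s (univ : Finset (Fin d × Fin n)),
                ∃ 𝒯 ∈ Finset.powersetCard (⌈(1-ε')*c*s⌉₊)
                    (univ : Finset (Fin c × Fin n)),
                  ∀ q ∈ 𝒮, ∀ v : Fin c, (v, ω (q.1, v) q.2) ∈ 𝒯) : ℕ) : ℝ) := by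
          rw [h0]
          exact_mod_cast h1
      _ ≤ ∑ s ∈ Finset.Icc 1 M, (1/2)^s * ((Nat.factorial n : ℕ) : ℝ)^(c*d) :=
          Finset.sum_le_sum hQs
      _ = (∑ s ∈ Finset.Icc 1 M, ((1:ℝ)/2)^s) * ((Nat.factorial n : ℕ) : ℝ)^(c*d) := by
          rw [Finset.sum_mul]
      _ < 1 * ((Nat.factorial n : ℕ) : ℝ)^(c*d) := mul_lt_mul_of_pos_right hgeom hF0
      _ = ((Nat.factorial n : ℕ) : ℝ)^(c*d) := one_mul _
  rw [hcardΩ] at hbig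
  exact lt_irrefl _ hbig

end Aux

/-- **One-sided lossless expanders** (Theorem `thm:lossless-expander`).
For every ε ∈ (0,1) there is K = K(ε), and for every β ∈ (0,1/2] there is d₀ = d₀(β,ε),
such that for all d₁, d₂ ≥ d₀ that are multiples of K with 1 ≥ d₁/d₂ ≥ β/(1−β)
there is μ > 0 such that for every N there is a finite (d₁,d₂)-biregular graph Z with
at least N vertices in which every nonempty S ⊆ L(Z) with |S| ≤ μ|L(Z)| satisfies
|N_Z(S)| ≥ (1−ε)·d₁·|S|. -/
theorem one_sided_lossless_expanders :
    ∀ ε : ℝ, 0 < ε → ε < 1 →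
    ∃ K : ℕ, 0 < K ∧
      ∀ β : ℝ, 0 < β → β ≤ 1 / 2 →
      ∃ d₀ : ℕ, 0 < d₀ ∧
        ∀ d₁ d₂ : ℕ, d₀ ≤ d₁ → d₀ ≤ d₂ → K ∣ d₁ → K ∣ d₂ →
          (d₁ : ℝ) / (d₂ : ℝ) ≤ 1 → β / (1 - β) ≤ (d₁ : ℝ) / (d₂ : ℝ) →
        ∃ μ : ℝ, 0 < μ ∧
          ∀ N : ℕ, ∃ (n : ℕ) (Z : SimpleGraph (Fin n)) (L R : Set (Fin n)),
            N ≤ n ∧ IsBiregular Z L R d₁ d₂ ∧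
            ∀ S : Set (Fin n), S ⊆ L → S.Nonempty → (S.ncard : ℝ) ≤ μ * (L.ncard : ℝ) →
              (1 - ε) * (d₁ : ℝ) * (S.ncard : ℝ) ≤ ((nbrSet Z S).ncard : ℝ) := by
  intro ε hε0 hε1
  refine ⟨1, one_pos, ?_⟩
  intro β hβ0 hβh
  set ε' : ℝ := min ε (1/2) with hε'def
  have hε'0 : 0 < ε' := lt_min hε0 (by norm_num)
  have hε'h : ε' ≤ 1/2 := min_le_right _ _
  have hε'ε : ε' ≤ ε := min_le_left _ _
  refine ⟨⌈(8:ℝ)/ε'⌉₊ + 1, Nat.succ_pos _, ?_⟩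
  intro d₁ d₂ hd1 hd2 _ _ _ _
  have hD0 : (0:ℝ) ≤ D0 d₁ d₂ := by unfold D0; positivity
  have hd2p : 0 < d₂ := by omega
  have hd2R : (0:ℝ) < d₂ := by exact_mod_cast hd2p
  have hden : (0:ℝ) < 2 * (d₂:ℝ) * (D0 d₁ d₂ + 1) := by
    apply mul_pos (by linarith) (by linarith)
  set μ : ℝ := 1 / (2 * (d₂:ℝ) * (D0 d₁ d₂ + 1)) with hμdef
  have hμ0 : 0 < μ := div_pos one_pos hden
  refine ⟨μ, hμ0, ?_⟩
  intro N
  set n := N + 1 with hn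
  -- hypotheses of exists_good
  have hc8 : (8:ℝ) ≤ ε' * d₁ := by
    have h1 : (8:ℝ)/ε' ≤ (⌈(8:ℝ)/ε'⌉₊ : ℝ) := Nat.le_ceil _
    have h2 : ((⌈(8:ℝ)/ε'⌉₊ : ℕ) : ℝ) + 1 ≤ (d₁:ℝ) := by
      have : (⌈(8:ℝ)/ε'⌉₊ + 1 : ℕ) ≤ d₁ := hd1
      exact_mod_cast this
    have h3 : (8:ℝ)/ε' ≤ d₁ := by linarith
    calc (8:ℝ) = ε' * ((8:ℝ)/ε') := by field_simp
      _ ≤ ε' * d₁ := mul_le_mul_of_nonneg_left h3 hε'0.le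
  have hμd : μ * d₂ ≤ 1 / (2 * (D0 d₁ d₂ + 1)) := by
    have heq : μ * (d₂:ℝ) = 1 / (2 * (D0 d₁ d₂ + 1)) := by
      rw [hμdef]
      field_simp
    exact le_of_eq heq
  obtain ⟨ω, hω⟩ := exists_good d₁ d₂ n ε' μ hε'0 hε'h hc8 hμ0.le hμd
  -- build the graph on Fin (d₂*n + d₁*n)
  set m := d₂ * n + d₁ * n with hm
  set e : VV d₁ d₂ n ≃ Fin m :=
    (Equiv.sumCongr finProdFinEquiv finProdFinEquiv).trans finSumFinEquiv with he
  set Z : SimpleGraph (Fin m) := SimpleGraph.comap (⇑e.symm) (GG d₁ d₂ n ω) with hZ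
  set L' : Set (Fin m) := ⇑e '' (Set.range Sum.inl) with hL'
  set R' : Set (Fin m) := ⇑e '' (Set.range Sum.inr) with hR'
  have hNm : N ≤ m := by
    have h1 : n ≤ d₂ * n := Nat.le_mul_of_pos_left n hd2p
    omega
  -- adjacency transport
  have hZadj : ∀ a b : Fin m, Z.Adj a b ↔ (GG d₁ d₂ n ω).Adj (e.symm a) (e.symm b) := by
    intro a b
    rfl
  -- the inverse image facts
  have hsymm_img : ∀ x : VV d₁ d₂ n, e.symm (e x) = x := fun x => e.symm_apply_apply x
  -- cardinal of L'
  have hLcard : L'.ncard = d₂ * n := by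
    rw [hL', Set.ncard_image_of_injective _ e.injective, ← Set.image_univ,
      Set.ncard_image_of_injective _ Sum.inl_injective, Set.ncard_univ]
    simp [Nat.card_eq_fintype_card]
  refine ⟨m, Z, L', R', hNm, ?_, ?_⟩
  · -- biregular
    refine ⟨⟨?_, ?_, ?_⟩, ?_, ?_⟩
    · -- disjoint
      rw [hL', hR']
      rw [Set.disjoint_image_iff e.injective]
      exact Set.isCompl_range_inl_range_inr.disjoint
    · -- cover
      rw [hL', hR', ← Set.image_union, Set.range_inl_union_range_inr, Set.image_univ,
        e.range_eq_univ]
    · -- cross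
      intro a b hab
      rw [hZadj] at hab
      rcases GG_cross hab with ⟨h1, h2⟩ | ⟨h1, h2⟩
      · left
        constructor
        · rw [hL']; exact ⟨e.symm a, h1, by simp⟩
        · rw [hR']; exact ⟨e.symm b, h2, by simp⟩
      · right
        constructor
        · rw [hR']; exact ⟨e.symm a, h1, by simp⟩
        · rw [hL']; exact ⟨e.symm b, h2, by simp⟩
    · -- degL
      rintro v ⟨x, ⟨⟨u, i⟩, rfl⟩, rfl⟩
      have h1 : deg Z (e (Sum.inl (u, i))) = deg (GG d₁ d₂ n ω) (Sum.inl (u, i)) := by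
        rw [hZ]
        have := deg_comap e.symm (GG d₁ d₂ n ω) (e (Sum.inl (u, i)))
        rw [this, hsymm_img]
      rw [h1, deg_GG_inl]
    · -- degR
      rintro v ⟨x, ⟨⟨vv, j⟩, rfl⟩, rfl⟩
      have h1 : deg Z (e (Sum.inr (vv, j))) = deg (GG d₁ d₂ n ω) (Sum.inr (vv, j)) := by
        rw [hZ]
        have := deg_comap e.symm (GG d₁ d₂ n ω) (e (Sum.inr (vv, j)))
        rw [this, hsymm_img]
      rw [h1, deg_GG_inr]
  · -- expansion
    intro S hSL hSne hSsize
    set SS : Set (VV d₁ d₂ n) := ⇑e.symm '' S with hSS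
    have hSSsub : SS ⊆ Set.range (Sum.inl : (Fin d₂ × Fin n) → VV d₁ d₂ n) := by
      rw [hSS]
      rintro x ⟨a, haS, rfl⟩
      obtain ⟨y, hy, rfl⟩ := hSL haS
      rw [hsymm_img]
      exact hy
    set 𝒮 : Finset (Fin d₂ × Fin n) := (Sum.inl ⁻¹' SS).toFinset with h𝒮
    have h𝒮coe : (↑𝒮 : Set (Fin d₂ × Fin n)) = Sum.inl ⁻¹' SS := by
      rw [h𝒮]; exact Set.coe_toFinset _
    have himg : Sum.inl '' (↑𝒮 : Set (Fin d₂ × Fin n)) = SS := by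
      rw [h𝒮coe]
      exact Set.image_preimage_eq_of_subset hSSsub
    have hSeq : S = ⇑e '' SS := by
      rw [hSS, Set.image_image]
      simp
    have hScard : S.ncard = 𝒮.card := by
      rw [hSeq, Set.ncard_image_of_injective _ e.injective, ← himg,
        Set.ncard_image_of_injective _ Sum.inl_injective, Set.ncard_coe_finset]
    have h𝒮ne : 𝒮.Nonempty := by
      obtain ⟨a, ha⟩ := hSne
      obtain ⟨y, hy, hay⟩ := hSL ha
      obtain ⟨⟨u, i⟩, rfl⟩ := hy
      refine ⟨(u, i), ?_⟩
      rw [← Finset.mem_coe, h𝒮coe]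
      simp only [Set.mem_preimage]
      rw [hSS]
      exact ⟨a, ha, by rw [← hay, hsymm_img]⟩
    have h𝒮size : (𝒮.card : ℝ) ≤ μ * ((d₂:ℝ) * n) := by
      rw [← hScard]
      calc (S.ncard : ℝ) ≤ μ * (L'.ncard : ℝ) := hSsize
        _ = μ * ((d₂:ℝ) * n) := by rw [hLcard]; push_cast; ring
    have hexp := hω 𝒮 h𝒮ne h𝒮size
    -- neighborhood set
    have hnbr : nbrSet Z S = ⇑e '' (Sum.inr '' ↑(NBF d₁ d₂ n ω 𝒮)) := by
      rw [hZ]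
      have h1 := nbrSet_comap e.symm (GG d₁ d₂ n ω) S
      rw [h1, Equiv.symm_symm, ← hSS, ← himg, nbrSet_GG]
    have hnbrcard : (nbrSet Z S).ncard = (NBF d₁ d₂ n ω 𝒮).card := by
      rw [hnbr, Set.ncard_image_of_injective _ e.injective,
        Set.ncard_image_of_injective _ Sum.inr_injective, Set.ncard_coe_finset]
    rw [hnbrcard, hScard]
    calc (1 - ε) * (d₁:ℝ) * (𝒮.card : ℝ) ≤ (1 - ε') * (d₁:ℝ) * (𝒮.card : ℝ) := by
          apply mul_le_mul_of_nonneg_right _ (Nat.cast_nonneg _)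
          apply mul_le_mul_of_nonneg_right _ (Nat.cast_nonneg _)
          linarith
      _ ≤ ((NBF d₁ d₂ n ω 𝒮).card : ℝ) := hexp

end UNE
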